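/- Let A, B be real symmetric n×n matrices with tr(A) = tr(B) = 0. If {x ∈ ℝⁿ : xᵀAx ≤ 0} ⊆ {x ∈ ℝⁿ : xᵀBx ≤ 0}, then B = cA for some real number c. -/

import Mathlib

open Matrix Finset

section Helpers

variable {n : ℕ}

lemma bf_symm {A : Matrix (Fin n) (Fin n) ℝ} (hA : A.IsSymm) (x y : Fin n → ℝ) :
    y ⬝ᵥ A.mulVec x = x ⬝ᵥ A.mulVec y := by
  rw [dotProduct_mulVec, ← mulVec_transpose, hA.eq, dotProduct_comm]

lemma sum_dotProduct' {ι : Type*} (s : Finset ι) (f : ι → (Fin n → ℝ)) (w : Fin n → ℝ) :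
    (∑ k ∈ s, f k) ⬝ᵥ w = ∑ k ∈ s, f k ⬝ᵥ w := by
  simp [dotProduct, Finset.sum_mul, Finset.sum_comm (s := s)]

lemma dotProduct_sum' {ι : Type*} (s : Finset ι) (w : Fin n → ℝ) (f : ι → (Fin n → ℝ)) :
    w ⬝ᵥ (∑ k ∈ s, f k) = ∑ k ∈ s, w ⬝ᵥ f k := by
  simp [dotProduct, Finset.mul_sum]
  rw [Finset.sum_comm]

lemma mulVec_sum' {ι : Type*} (s : Finset ι) (A : Matrix (Fin n) (Fin n) ℝ) (f : ι → (Fin n → ℝ)) :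
    A.mulVec (∑ k ∈ s, f k) = ∑ k ∈ s, A.mulVec (f k) := by
  ext j
  simp [mulVec, dotProduct_sum']

lemma bf_sum_sum {ι κ : Type*} [Fintype ι] [Fintype κ] (A : Matrix (Fin n) (Fin n) ℝ)
    (c : ι → ℝ) (d : κ → ℝ) (x : ι → Fin n → ℝ) (y : κ → Fin n → ℝ) :
    (∑ k, c k • x k) ⬝ᵥ A.mulVec (∑ l, d l • y l)
      = ∑ k, ∑ l, c k * d l * (x k ⬝ᵥ A.mulVec (y l)) := by
  rw [mulVec_sum', sum_dotProduct']
  refine Finset.sum_congr rfl fun k _ => ?_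
  rw [dotProduct_sum']
  refine Finset.sum_congr rfl fun l _ => ?_
  rw [mulVec_smul, smul_dotProduct, dotProduct_smul]
  simp [smul_eq_mul, mul_assoc]

lemma bf_basis {A : Matrix (Fin n) (Fin n) ℝ} (j k : Fin n) :
    (Pi.single j 1 : Fin n → ℝ) ⬝ᵥ A.mulVec (Pi.single k 1) = A j k := by
  simp [single_dotProduct, mulVec_single]

lemma dp_sum_sum {ι κ : Type*} [Fintype ι] [Fintype κ]
    (c : ι → ℝ) (d : κ → ℝ) (x : ι → Fin n → ℝ) (y : κ → Fin n → ℝ) :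
    (∑ k, c k • x k) ⬝ᵥ (∑ l, d l • y l)
      = ∑ k, ∑ l, c k * d l * (x k ⬝ᵥ y l) := by
  rw [sum_dotProduct']
  refine Finset.sum_congr rfl fun k _ => ?_
  rw [dotProduct_sum']
  refine Finset.sum_congr rfl fun l _ => ?_
  rw [smul_dotProduct, dotProduct_smul]
  simp [smul_eq_mul, mul_assoc]


lemma rows_col_orthonormal {v : Fin n → Fin n → ℝ}
    (hv : ∀ i j, v i ⬝ᵥ v j = if i = j then (1:ℝ) else 0) (j l : Fin n) :
    ∑ i, v i j * v i l = if j = l then (1:ℝ) else 0 := by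
  let U : Matrix (Fin n) (Fin n) ℝ := Matrix.of v
  have hU : U * Uᵀ = 1 := by
    ext i k
    simpa [Matrix.mul_apply, dotProduct, Matrix.one_apply, U] using hv i k
  have hU2 : Uᵀ * U = 1 := mul_eq_one_comm.mp hU
  calc ∑ i, v i j * v i l = (Uᵀ * U) j l := by simp [Matrix.mul_apply, U, mul_comm]
    _ = if j = l then 1 else 0 := by rw [hU2]; simp [Matrix.one_apply]

lemma sum_quad_eq_trace {v : Fin n → Fin n → ℝ}
    (hv : ∀ i j, v i ⬝ᵥ v j = if i = j then (1:ℝ) else 0) (C : Matrix (Fin n) (Fin n) ℝ) :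
    ∑ i, v i ⬝ᵥ C.mulVec (v i) = C.trace := by
  have key := rows_col_orthonormal hv
  calc ∑ i, v i ⬝ᵥ C.mulVec (v i) = ∑ i, ∑ j, ∑ l, C j l * (v i j * v i l) := by
        refine Finset.sum_congr rfl fun i _ => ?_
        simp only [dotProduct, mulVec, Finset.mul_sum]
        exact Finset.sum_congr rfl fun j _ => Finset.sum_congr rfl fun l _ => by ring
    _ = ∑ j, ∑ l, C j l * ∑ i, (v i j * v i l) := by
        rw [Finset.sum_comm]
        refine Finset.sum_congr rfl fun j _ => ?_
        rw [Finset.sum_comm]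
        exact Finset.sum_congr rfl fun l _ => by rw [Finset.mul_sum]
    _ = ∑ j, C j j := by
        refine Finset.sum_congr rfl fun j _ => ?_
        simp [key]
    _ = C.trace := by simp [Matrix.trace, Matrix.diag]

lemma exists_unit_isotropic {A : Matrix (Fin n) (Fin n) ℝ} (hn : 0 < n) (hA : A.IsSymm)
    (htr : A.trace = 0) : ∃ u : Fin n → ℝ, u ⬝ᵥ u = 1 ∧ u ⬝ᵥ A.mulVec u = 0 := by
  haveI : NeZero n := ⟨hn.ne'⟩
  have htr' : ∑ i, A i i = 0 := by simpa [Matrix.trace, Matrix.diag] using htr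
  by_cases hd : ∀ i, A i i = 0
  · refine ⟨Pi.single 0 1, by simp [single_dotProduct, Pi.single_apply], ?_⟩
    rw [bf_basis]; exact hd 0
  · have hpos : ∃ i, 0 < A i i := by
      by_contra hp
      push_neg at hp
      exact hd fun i => (Finset.sum_eq_zero_iff_of_nonpos (fun i _ => hp i)).mp htr' i
        (Finset.mem_univ i)
    have hneg : ∃ j, A j j < 0 := by
      by_contra hp
      push_neg at hp
      exact hd fun i => (Finset.sum_eq_zero_iff_of_nonneg (fun i _ => hp i)).mp htr' i
        (Finset.mem_univ i)
    obtain ⟨i, hi⟩ := hpos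
    obtain ⟨j, hj⟩ := hneg
    have hij : i ≠ j := fun e => by rw [e] at hi; linarith
    set f : ℝ → ℝ := fun θ =>
      (Real.cos θ)^2 * A i i + (Real.sin θ)^2 * A j j + 2 * Real.sin θ * Real.cos θ * A i j with hf
    have hcont : Continuous f := by fun_prop
    have h0 : f 0 = A i i := by simp [hf]
    have h1 : f (Real.pi/2) = A j j := by simp [hf]
    have : (0:ℝ) ∈ Set.Icc (f (Real.pi/2)) (f 0) := by
      rw [h0, h1]; exact ⟨hj.le, hi.le⟩
    obtain ⟨θ, -, hθ⟩ := intermediate_value_Icc' (by positivity : (0:ℝ) ≤ Real.pi/2)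
      hcont.continuousOn this
    refine ⟨Real.cos θ • (Pi.single i 1 : Fin n → ℝ) + Real.sin θ • (Pi.single j 1 : Fin n → ℝ), ?_, ?_⟩
    · simp only [add_dotProduct, dotProduct_add, smul_dotProduct, dotProduct_smul,
        single_dotProduct, smul_eq_mul, Pi.single_apply]
      simp [hij, hij.symm, Real.sin_sq_add_cos_sq]
      ring_nf
      simp [Real.sin_sq_add_cos_sq]
    · simp only [add_dotProduct, dotProduct_add, smul_dotProduct, dotProduct_smul,
        mulVec_add, mulVec_smul, bf_basis, smul_eq_mul]
      rw [show A j i = A i j from hA.apply i j]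
      rw [hf] at hθ
      dsimp at hθ ⊢
      nlinarith [hθ]

section expand
variable {A : Matrix (Fin n) (Fin n) ℝ} (hA : A.IsSymm)

lemma bf_lin_right (x y z : Fin n → ℝ) (s : ℝ) :
    x ⬝ᵥ A.mulVec (y + s • z) = x ⬝ᵥ A.mulVec y + s * (x ⬝ᵥ A.mulVec z) := by
  simp [mulVec_add, mulVec_smul, dotProduct_add, dotProduct_smul]

lemma bf_lin_left (x y z : Fin n → ℝ) (s : ℝ) :
    (y + s • z) ⬝ᵥ A.mulVec x = y ⬝ᵥ A.mulVec x + s * (z ⬝ᵥ A.mulVec x) := by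
  simp [add_dotProduct, smul_dotProduct]

include hA in
lemma qf_expand2 (x y : Fin n → ℝ) (s : ℝ) :
    (x + s • y) ⬝ᵥ A.mulVec (x + s • y)
      = x ⬝ᵥ A.mulVec x + s^2 * (y ⬝ᵥ A.mulVec y) + 2*s*(x ⬝ᵥ A.mulVec y) := by
  simp only [mulVec_add, mulVec_smul, dotProduct_add, dotProduct_smul, add_dotProduct,
    smul_dotProduct, smul_eq_mul]
  rw [bf_symm hA x y]
  ring

include hA in
lemma qf_expand3 (x y z : Fin n → ℝ) (a c : ℝ) :
    (a • x + y + c • z) ⬝ᵥ A.mulVec (a • x + y + c • z)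
      = a^2 * (x ⬝ᵥ A.mulVec x) + y ⬝ᵥ A.mulVec y + c^2 * (z ⬝ᵥ A.mulVec z)
        + 2*a*(x ⬝ᵥ A.mulVec y) + 2*a*c*(x ⬝ᵥ A.mulVec z) + 2*c*(y ⬝ᵥ A.mulVec z) := by
  simp only [mulVec_add, mulVec_smul, dotProduct_add, dotProduct_smul, add_dotProduct,
    smul_dotProduct, smul_eq_mul]
  rw [bf_symm hA x y, bf_symm hA x z, bf_symm hA y z]
  ring

end expand

section main
variable {A B : Matrix (Fin n) (Fin n) ℝ} (hA : A.IsSymm) (hB : B.IsSymm)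
  (iso : ∀ x : Fin n → ℝ, x ⬝ᵥ A.mulVec x = 0 → x ⬝ᵥ B.mulVec x = 0)

include hA hB iso in
lemma pair_zero {x y : Fin n → ℝ} (hx : x ⬝ᵥ A.mulVec x = 0) (hy : y ⬝ᵥ A.mulVec y = 0)
    (hxy : x ⬝ᵥ A.mulVec y = 0) : x ⬝ᵥ B.mulVec y = 0 := by
  have h1 : (x + (1:ℝ) • y) ⬝ᵥ A.mulVec (x + (1:ℝ) • y) = 0 := by
    rw [qf_expand2 hA]; rw [hx, hy, hxy]; ring
  have h2 := iso _ h1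
  rw [qf_expand2 hB] at h2
  rw [iso x hx, iso y hy] at h2
  linarith

include hA hB iso in
lemma identity_I {x y z : Fin n → ℝ} (hx : x ⬝ᵥ A.mulVec x = 0) (hy : y ⬝ᵥ A.mulVec y = 0)
    (hz : z ⬝ᵥ A.mulVec z = 0) (ha2 : x ⬝ᵥ A.mulVec y ≠ 0) :
    (y ⬝ᵥ B.mulVec z) * (x ⬝ᵥ A.mulVec y) = (y ⬝ᵥ A.mulVec z) * (x ⬝ᵥ B.mulVec y) := by
  set a1 := y ⬝ᵥ A.mulVec z
  set a2 := x ⬝ᵥ A.mulVec y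
  set a3 := x ⬝ᵥ A.mulVec z
  set b1 := y ⬝ᵥ B.mulVec z
  set b2 := x ⬝ᵥ B.mulVec y
  set b3 := x ⬝ᵥ B.mulVec z
  have hBx := iso x hx
  have hBy := iso y hy
  have hBz := iso z hz
  have key : ∀ ε : ℝ, ε ≠ 0 → a2 + ε*a3 ≠ 0 →
      b1 * (a2 + ε*a3) = a1*b2 + ε*(a1*b3) := by
    intro ε hε hd
    set γ := -(ε*a1)/(a2+ε*a3) with hγdef
    have hγ : γ*(a2+ε*a3) = -(ε*a1) := by
      rw [hγdef]; field_simp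
    have hwA : (γ • x + y + ε • z) ⬝ᵥ A.mulVec (γ • x + y + ε • z) = 0 := by
      rw [qf_expand3 hA, hx, hy, hz]
      linear_combination 2*hγ
    have hwB := iso _ hwA
    rw [qf_expand3 hB, hBx, hBy, hBz] at hwB
    have h5 : ε*(b1 * (a2 + ε*a3)) = ε*(a1*b2 + ε*(a1*b3)) := by
      linear_combination (a2+ε*a3)/2*hwB - (b2+ε*b3)*hγ
    exact mul_left_cancel₀ hε h5
  set ε := if a3 = 0 then (1:ℝ) else |a2|/(2*|a3|) with hεdef
  have hε : 0 < ε := by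
    rw [hεdef]
    split
    · norm_num
    · positivity
  have habs : |ε * a3| < |a2| := by
    have h2' : 0 < |a2| := abs_pos.mpr ha2
    rw [abs_mul, abs_of_pos hε]
    rcases eq_or_ne a3 0 with h3 | h3
    · simpa [h3] using h2'
    · have h3' : 0 < |a3| := abs_pos.mpr h3
      have hε' : ε = |a2|/(2*|a3|) := by rw [hεdef, if_neg h3]
      rw [hε']
      have he : |a2|/(2*|a3|)*|a3| = |a2|/2 := by field_simp
      rw [he]; linarith
  have hd1 : a2 + ε*a3 ≠ 0 := by
    intro h0
    have : |a2| = |ε*a3| := by rw [show a2 = -(ε*a3) by linarith, abs_neg]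
    linarith
  have hd2 : a2 + (-ε)*a3 ≠ 0 := by
    intro h0
    have : |a2| = |ε*a3| := by
      rw [show a2 = ε*a3 by linarith]
    linarith
  have k1 := key ε hε.ne' hd1
  have k2 := key (-ε) (by linarith) hd2
  have : (2*ε) * (b1*a2) = (2*ε) * (a1*b2) := by linear_combination ε*k1 + ε*k2
  exact mul_left_cancel₀ (by positivity) this

end main

end Helpers

lemma complete_orthonormal {m : ℕ} (u : Fin (m+1) → ℝ) (hu : u ⬝ᵥ u = 1) :
    ∃ w : Fin (m+1) → (Fin (m+1) → ℝ),
      (∀ i j, w i ⬝ᵥ w j = if i = j then (1:ℝ) else 0) ∧ w 0 = u := by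
  set E := EuclideanSpace ℝ (Fin (m+1))
  let v : Fin (m+1) → E := fun _ => (WithLp.equiv 2 (Fin (m+1) → ℝ)).symm u
  have hinner : ∀ x y : E, (inner ℝ x y : ℝ) = ∑ k, x k * y k := by
    intro x y
    rw [PiLp.inner_apply]
    simp [RCLike.inner_apply, mul_comm]
  have hcard : Module.finrank ℝ E = Fintype.card (Fin (m+1)) := by
    simp [E]
  have hortho : Orthonormal ℝ (Set.restrict {(0 : Fin (m+1))} v) := by
    rw [orthonormal_iff_ite]
    rintro ⟨i, hi⟩ ⟨j, hj⟩
    simp only [Set.mem_singleton_iff] at hi hj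
    subst hi; subst hj
    simp only [Set.restrict_apply, if_pos rfl]
    rw [hinner]
    exact hu
  obtain ⟨b, hb⟩ := hortho.exists_orthonormalBasis_extension_of_card_eq hcard
  refine ⟨fun i => (WithLp.equiv 2 (Fin (m+1) → ℝ)) (b i), ?_, ?_⟩
  · intro i j
    have := (orthonormal_iff_ite.mp b.orthonormal) i j
    rw [hinner] at this
    simpa [dotProduct] using this
  · show (WithLp.equiv 2 (Fin (m+1) → ℝ)) (b 0) = u
    rw [hb 0 rfl]
    rfl

lemma horn : ∀ (m : ℕ) (A : Matrix (Fin (m+1)) (Fin (m+1)) ℝ), A.IsSymm → A.trace = 0 →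
    ∀ u : Fin (m+1) → ℝ, u ⬝ᵥ u = 1 → u ⬝ᵥ A.mulVec u = 0 →
    ∃ v : Fin (m+1) → (Fin (m+1) → ℝ),
      (∀ i j, v i ⬝ᵥ v j = if i = j then (1:ℝ) else 0) ∧ v 0 = u ∧
      ∀ i, v i ⬝ᵥ A.mulVec (v i) = 0 := by
  intro m
  induction m with
  | zero =>
    intro A hA htr u hu hq
    refine ⟨fun _ => u, ?_, rfl, fun i => hq⟩
    intro i j
    have : i = j := by omega
    simp [this, hu]
  | succ m IH =>
    intro A hA htr u hu hq
    obtain ⟨w, hw, hw0⟩ := complete_orthonormal u hu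
    set M : Matrix (Fin (m+1)) (Fin (m+1)) ℝ :=
      Matrix.of (fun i j => w i.succ ⬝ᵥ A.mulVec (w j.succ)) with hM
    have hMapp : ∀ i j, M i j = w i.succ ⬝ᵥ A.mulVec (w j.succ) := fun i j => rfl
    have hMsymm : M.IsSymm := by
      ext i j
      simp only [Matrix.transpose_apply, hMapp]
      exact bf_symm hA _ _
    have hMtr : M.trace = 0 := by
      have h1 : ∑ i, w i ⬝ᵥ A.mulVec (w i) = A.trace := sum_quad_eq_trace hw A
      rw [Fin.sum_univ_succ, hw0, hq, zero_add, htr] at h1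
      rw [Matrix.trace]
      simpa [Matrix.diag, hMapp] using h1
    obtain ⟨u', hu', hqu'⟩ := exists_unit_isotropic (Nat.succ_pos m) hMsymm hMtr
    obtain ⟨v', hv', hv'0, hv'q⟩ := IH M hMsymm hMtr u' hu' hqu'
    set v : Fin (m+2) → (Fin (m+2) → ℝ) :=
      Fin.cases u (fun i => ∑ k, v' i k • w k.succ) with hv
    have hvz : v 0 = u := rfl
    have hvs : ∀ i : Fin (m+1), v i.succ = ∑ k, v' i k • w k.succ := fun i => by
      simp [hv]
    have hzs : ∀ j : Fin (m+1), v 0 ⬝ᵥ v j.succ = 0 := by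
      intro j
      rw [hvz, hvs, ← hw0, dotProduct_sum']
      refine Finset.sum_eq_zero fun k _ => ?_
      rw [dotProduct_smul, hw]
      simp [(Fin.succ_ne_zero k).symm]
    refine ⟨v, ?_, hvz, ?_⟩
    · intro i j
      induction i using Fin.cases with
      | zero =>
        induction j using Fin.cases with
        | zero => simp [hvz, hu]
        | succ j => rw [hzs j]; simp [(Fin.succ_ne_zero j).symm]
      | succ i =>
        induction j using Fin.cases with
        | zero => rw [dotProduct_comm, hzs i]; simp [Fin.succ_ne_zero i]
        | succ j =>
          rw [hvs, hvs, dp_sum_sum]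
          have : ∀ k l : Fin (m+1), v' i k * v' j l * (w k.succ ⬝ᵥ w l.succ)
              = v' i k * v' j l * (if k = l then (1:ℝ) else 0) := by
            intro k l
            rw [hw]
            simp [Fin.succ_inj]
          simp only [this]
          have h2 : ∑ k, ∑ l, v' i k * v' j l * (if k = l then (1:ℝ) else 0)
              = ∑ k, v' i k * v' j k := by
            refine Finset.sum_congr rfl fun k _ => ?_
            simp [mul_ite, Finset.sum_ite_eq' Finset.univ k]
          rw [h2]
          have h3 := hv' i j
          rw [dotProduct] at h3
          rw [h3]
          simp [Fin.succ_inj]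
    · intro i
      induction i using Fin.cases with
      | zero => rw [hvz]; exact hq
      | succ i =>
        rw [hvs, bf_sum_sum]
        have h4 := hv'q i
        calc ∑ k, ∑ l, v' i k * v' i l * (w k.succ ⬝ᵥ A.mulVec (w l.succ))
            = ∑ k, v' i k * ∑ l, M k l * v' i l := by
              refine Finset.sum_congr rfl fun k _ => ?_
              rw [Finset.mul_sum]
              refine Finset.sum_congr rfl fun l _ => ?_
              rw [hMapp]
              ring
          _ = 0 := by
              have := hv'q i
              rw [dotProduct] at this
              simpa [mulVec, dotProduct] using this

section Helpers2
variable {n : ℕ}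

section main
variable {A B : Matrix (Fin n) (Fin n) ℝ} (hA : A.IsSymm) (hB : B.IsSymm)
  (iso : ∀ x : Fin n → ℝ, x ⬝ᵥ A.mulVec x = 0 → x ⬝ᵥ B.mulVec x = 0)

include hA hB iso in
lemma lemma_L {x y : Fin n → ℝ} {c : ℝ} (hx : x ⬝ᵥ A.mulVec x = 0)
    (hy : y ⬝ᵥ A.mulVec y = 0) (haxy : x ⬝ᵥ A.mulVec y ≠ 0)
    (hbxy : x ⬝ᵥ B.mulVec y = c * (x ⬝ᵥ A.mulVec y)) :
    ∀ z, z ⬝ᵥ A.mulVec z = 0 → y ⬝ᵥ B.mulVec z = c * (y ⬝ᵥ A.mulVec z) := by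
  intro z hz
  have hI := identity_I hA hB iso hx hy hz haxy
  rw [hbxy] at hI
  refine mul_right_cancel₀ haxy ?_
  linear_combination hI

include hA hB iso in
lemma chain {p q : Fin n → ℝ} (hp : p ⬝ᵥ A.mulVec p = 0) (hq : q ⬝ᵥ A.mulVec q = 0)
    (hpq : p ⬝ᵥ A.mulVec q ≠ 0) {c : ℝ}
    (hc : p ⬝ᵥ B.mulVec q = c * (p ⬝ᵥ A.mulVec q)) :
    ∀ y z, y ⬝ᵥ A.mulVec y = 0 → z ⬝ᵥ A.mulVec z = 0 →
      y ⬝ᵥ B.mulVec z = c * (y ⬝ᵥ A.mulVec z) := by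
  have hqz := lemma_L hA hB iso hp hq hpq hc
  have hqp' : q ⬝ᵥ A.mulVec p ≠ 0 := by rw [bf_symm hA]; exact hpq
  have hcq : q ⬝ᵥ B.mulVec p = c * (q ⬝ᵥ A.mulVec p) := by
    rw [bf_symm hB p q, bf_symm hA p q]; exact hc
  have hpz := lemma_L hA hB iso hq hp hqp' hcq
  intro y z hy hz
  by_cases hqy : q ⬝ᵥ A.mulVec y = 0
  · -- use y' = q + s • y
    obtain ⟨s, hs0, hs⟩ : ∃ s : ℝ, (s = 1 ∨ s = -1) ∧
        p ⬝ᵥ A.mulVec q + s * (p ⬝ᵥ A.mulVec y) ≠ 0 := by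
      by_cases hcase : p ⬝ᵥ A.mulVec q + p ⬝ᵥ A.mulVec y = 0
      · exact ⟨-1, Or.inr rfl, fun h0 => hpq (by linarith)⟩
      · exact ⟨1, Or.inl rfl, by simpa using hcase⟩
    have hsne : s ≠ 0 := by rcases hs0 with rfl | rfl <;> norm_num
    have hy' : (q + s • y) ⬝ᵥ A.mulVec (q + s • y) = 0 := by
      rw [qf_expand2 hA, hq, hy, hqy]; ring
    have hpy' : p ⬝ᵥ A.mulVec (q + s • y) ≠ 0 := by
      rw [bf_lin_right]; exact hs
    have hbpy' : p ⬝ᵥ B.mulVec (q + s • y) = c * (p ⬝ᵥ A.mulVec (q + s • y)) := by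
      rw [bf_lin_right, bf_lin_right, hc, hpz y hy]; ring
    have hLy' := lemma_L hA hB iso hp hy' hpy' hbpy' z hz
    rw [bf_lin_left, bf_lin_left, hqz z hz] at hLy'
    refine mul_left_cancel₀ hsne ?_
    linear_combination hLy'
  · exact lemma_L hA hB iso hq hy hqy (hqz y hy) z hz

end main

lemma isotropic_pres {m : ℕ} {A B : Matrix (Fin (m+1)) (Fin (m+1)) ℝ} (hA : A.IsSymm)
    (htrA : A.trace = 0) (htrB : B.trace = 0)
    (h : ∀ x : Fin (m+1) → ℝ, x ⬝ᵥ A.mulVec x ≤ 0 → x ⬝ᵥ B.mulVec x ≤ 0) :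
    ∀ x, x ⬝ᵥ A.mulVec x = 0 → x ⬝ᵥ B.mulVec x = 0 := by
  intro x hx
  rcases eq_or_ne x 0 with rfl | hx0
  · simp
  · have hnn : (0:ℝ) ≤ x ⬝ᵥ x := Finset.sum_nonneg fun i _ => mul_self_nonneg _
    have hne : x ⬝ᵥ x ≠ 0 := fun h0 => hx0 (dotProduct_self_eq_zero.mp h0)
    have hpos : 0 < x ⬝ᵥ x := lt_of_le_of_ne hnn (Ne.symm hne)
    set r := Real.sqrt (x ⬝ᵥ x) with hrdef
    have hr : 0 < r := Real.sqrt_pos.mpr hpos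
    have hr2 : r^2 = x ⬝ᵥ x := Real.sq_sqrt hnn
    set u := r⁻¹ • x with hudef
    have huu : u ⬝ᵥ u = 1 := by
      rw [hudef, smul_dotProduct, dotProduct_smul, smul_eq_mul, smul_eq_mul, ← hr2]
      field_simp
    have hqu : u ⬝ᵥ A.mulVec u = 0 := by
      rw [hudef, smul_dotProduct, mulVec_smul, dotProduct_smul, smul_eq_mul, smul_eq_mul, hx]
      ring
    obtain ⟨v, hv, hv0, hviso⟩ := horn m A hA htrA u huu hqu
    have hsum : ∑ i, v i ⬝ᵥ B.mulVec (v i) = 0 := by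
      rw [sum_quad_eq_trace hv B, htrB]
    have hle : ∀ i ∈ Finset.univ, v i ⬝ᵥ B.mulVec (v i) ≤ 0 :=
      fun i _ => h _ (le_of_eq (hviso i))
    have hall := (Finset.sum_eq_zero_iff_of_nonpos hle).mp hsum
    have hu0 : u ⬝ᵥ B.mulVec u = 0 := by
      rw [← hv0]; exact hall 0 (Finset.mem_univ 0)
    have hxu : x = r • u := by
      rw [hudef, smul_smul]
      rw [mul_inv_cancel₀ hr.ne', one_smul]
    rw [hxu, smul_dotProduct, mulVec_smul, dotProduct_smul, hu0]
    simp

end Helpers2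

theorem traceless_cone_inclusion_implies_proportional {n : ℕ}
    (A B : Matrix (Fin n) (Fin n) ℝ) (hA : A.IsSymm) (hB : B.IsSymm)
    (htrA : A.trace = 0) (htrB : B.trace = 0)
    (h : {x : Fin n → ℝ | x ⬝ᵥ A.mulVec x ≤ 0} ⊆ {x : Fin n → ℝ | x ⬝ᵥ B.mulVec x ≤ 0}) :
    ∃ c : ℝ, B = c • A := by
  rcases Nat.eq_zero_or_pos n with h0 | hn
  · subst h0
    exact ⟨0, by ext i j; exact i.elim0⟩
  · obtain ⟨m, rfl⟩ : ∃ m, n = m + 1 := ⟨n-1, by omega⟩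
    have h' : ∀ x : Fin (m+1) → ℝ, x ⬝ᵥ A.mulVec x ≤ 0 → x ⬝ᵥ B.mulVec x ≤ 0 :=
      fun x hx => h hx
    have iso := isotropic_pres hA htrA htrB h'
    obtain ⟨u0, hu0, hq0⟩ := exists_unit_isotropic (Nat.succ_pos m) hA htrA
    obtain ⟨v, hv, hv0, hviso⟩ := horn m A hA htrA u0 hu0 hq0
    have hbasis : ∀ j : Fin (m+1), (Pi.single j 1 : Fin (m+1) → ℝ) = ∑ i, (v i j) • v i := by
      intro j
      ext l
      rw [Finset.sum_apply]
      simp only [Pi.smul_apply, smul_eq_mul]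
      rw [rows_col_orthonormal hv j l, Pi.single_apply]
      simp [eq_comm]
    have hentry : ∀ (C : Matrix (Fin (m+1)) (Fin (m+1)) ℝ) (j k : Fin (m+1)),
        C j k = ∑ i, ∑ i', (v i j) * (v i' k) * (v i ⬝ᵥ C.mulVec (v i')) := by
      intro C j k
      calc C j k = (Pi.single j 1 : Fin (m+1) → ℝ) ⬝ᵥ C.mulVec (Pi.single k 1) :=
            (bf_basis j k).symm
        _ = _ := by rw [hbasis j, hbasis k, bf_sum_sum]
    by_cases hall : ∀ i i', v i ⬝ᵥ A.mulVec (v i') = 0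
    · refine ⟨0, ?_⟩
      ext j k
      rw [hentry B j k]
      have : ∀ i i' : Fin (m+1), v i j * v i' k * (v i ⬝ᵥ B.mulVec (v i')) = 0 := by
        intro i i'
        rw [pair_zero hA hB iso (hviso i) (hviso i') (hall i i')]
        ring
      simp only [this, Finset.sum_const_zero]
      simp
    · push_neg at hall
      obtain ⟨p0, q0, hpq⟩ := hall
      set c := (v p0 ⬝ᵥ B.mulVec (v q0)) / (v p0 ⬝ᵥ A.mulVec (v q0)) with hcdef
      have hc : v p0 ⬝ᵥ B.mulVec (v q0) = c * (v p0 ⬝ᵥ A.mulVec (v q0)) := by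
        rw [hcdef]; field_simp
      have hP := chain hA hB iso (hviso p0) (hviso q0) hpq hc
      refine ⟨c, ?_⟩
      ext j k
      have : B j k = c * A j k := by
        rw [hentry B j k, hentry A j k, Finset.mul_sum]
        refine Finset.sum_congr rfl fun i _ => ?_
        rw [Finset.mul_sum]
        refine Finset.sum_congr rfl fun i' _ => ?_
        rw [hP (v i) (v i') (hviso i) (hviso i')]
        ring
      simpa [Matrix.smul_apply] using this
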